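/- Let Z_1, Z_2, ... be nonnegative real-valued random variables, and suppose there exist sigma-algebras F_1, F_2, ... such that the conditional expectations E[Z_n | F_n] converge to 0 in probability. Then Z_n converges to 0 in probability. -/

import Mathlib

open MeasureTheory

/-- Let `Z₁, Z₂, ...` be nonnegative integrable random variables and suppose
there exist sub-σ-algebras `F₁, F₂, ...` such that `E[Z_n | F_n] → 0` in
probability.  Then `Z_n → 0` in probability. -/
theorem stmt_3 {Ω : Type*} {m0 : MeasurableSpace Ω} (P : Measure Ω)
    [IsProbabilityMeasure P] (Z : ℕ → Ω → ℝ)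
    (hZmeas : ∀ n, Measurable (Z n))
    (hZnonneg : ∀ n ω, 0 ≤ Z n ω)
    (hZint : ∀ n, Integrable (Z n) P)
    (F : ℕ → MeasurableSpace Ω) (hF : ∀ n, F n ≤ m0)
    (hcond : TendstoInMeasure P (fun n => P[Z n | F n]) Filter.atTop 0) :
    TendstoInMeasure P Z Filter.atTop 0 := by
  rw [tendstoInMeasure_iff_dist] at hcond ⊢
  intro ε hε
  rw [ENNReal.tendsto_atTop_zero]
  intro δ hδ
  set δr : ℝ := (min δ 1).toReal with hδr_def
  have hδr : 0 < δr := ENNReal.toReal_pos (lt_min hδ zero_lt_one).ne'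
    (ne_top_of_le_ne_top (by simp) (min_le_right _ _))
  set c : ℝ := ε * δr / 2 with hc_def
  have hc : 0 < c := by positivity
  obtain ⟨N, hN⟩ := ENNReal.tendsto_atTop_zero.mp (hcond c hc)
    (ENNReal.ofReal (δr / 2)) (by simp only [gt_iff_lt, ENNReal.ofReal_pos]; positivity)
  refine ⟨N, fun n hn => ?_⟩
  have hSeq : {x : Ω | ε ≤ dist (Z n x) ((0 : Ω → ℝ) x)} = {x | ε ≤ Z n x} := by
    ext x
    simp [Real.dist_eq, abs_of_nonneg (hZnonneg n x)]
  rw [hSeq]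
  set S : Set Ω := {x | ε ≤ Z n x} with hS_def
  set g : Ω → ℝ := P[Z n | F n] with hg_def
  have hgm : StronglyMeasurable[F n] g := stronglyMeasurable_condExp
  have hB : MeasurableSet[F n] {x | c ≤ g x} :=
    measurableSet_le measurable_const hgm.measurable
  have hB0 : MeasurableSet {x | c ≤ g x} := hF n _ hB
  set B : Set Ω := {x | c ≤ g x} with hB_def
  -- first part: P B ≤ δr/2
  have h1 : P B ≤ ENNReal.ofReal (δr / 2) := by
    refine le_trans (measure_mono ?_) (hN n hn)
    intro x hx
    simp only [Set.mem_setOf_eq, Pi.zero_apply, dist_zero_right, Real.norm_eq_abs]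
    exact le_trans hx (le_abs_self _)
  -- integral bound on Bᶜ
  have hint : ∫ x in Bᶜ, Z n x ∂P ≤ c := by
    have e1 : ∫ x in Bᶜ, Z n x ∂P = ∫ x in Bᶜ, g x ∂P :=
      (setIntegral_condExp (hF n) (hZint n) hB.compl).symm
    rw [e1]
    have e2 : ∫ x in Bᶜ, g x ∂P ≤ ∫ x in Bᶜ, c ∂P := by
      refine setIntegral_mono_on integrable_condExp.integrableOn
        (integrableOn_const (measure_lt_top _ _).ne) hB0.compl ?_
      intro x hx
      exact le_of_lt (not_le.mp hx)
    refine e2.trans ?_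
    rw [setIntegral_const, smul_eq_mul]
    calc (P Bᶜ).toReal * c ≤ 1 * c := by
          refine mul_le_mul_of_nonneg_right ?_ hc.le
          simpa using ENNReal.toReal_mono (by simp) (prob_le_one (μ := P) (s := Bᶜ))
      _ = c := one_mul c
  -- Markov on Bᶜ
  have hsetm : MeasurableSet {x : Ω | ENNReal.ofReal ε ≤ ENNReal.ofReal (Z n x)} :=
    measurableSet_le measurable_const (hZmeas n).ennreal_ofReal
  have h2 : P (S \ B) ≤ ENNReal.ofReal (δr / 2) := by
    have hsub : S \ B ⊆ {x | ENNReal.ofReal ε ≤ ENNReal.ofReal (Z n x)} ∩ Bᶜ := fun x hx =>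
      ⟨ENNReal.ofReal_le_ofReal hx.1, hx.2⟩
    have hmarkov := meas_ge_le_lintegral_div (μ := P.restrict Bᶜ)
      ((hZmeas n).ennreal_ofReal.aemeasurable) (ε := ENNReal.ofReal ε)
      (ENNReal.ofReal_pos.mpr hε).ne' ENNReal.ofReal_ne_top
    have hlint : ∫⁻ x, ENNReal.ofReal (Z n x) ∂(P.restrict Bᶜ)
        = ENNReal.ofReal (∫ x in Bᶜ, Z n x ∂P) :=
      (ofReal_integral_eq_lintegral_ofReal (hZint n).integrableOn
        (Filter.Eventually.of_forall fun x => hZnonneg n x)).symm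
    calc P (S \ B) ≤ P ({x | ENNReal.ofReal ε ≤ ENNReal.ofReal (Z n x)} ∩ Bᶜ) :=
          measure_mono hsub
      _ = (P.restrict Bᶜ) {x | ENNReal.ofReal ε ≤ ENNReal.ofReal (Z n x)} :=
          (Measure.restrict_apply hsetm).symm
      _ ≤ (∫⁻ x, ENNReal.ofReal (Z n x) ∂(P.restrict Bᶜ)) / ENNReal.ofReal ε := hmarkov
      _ ≤ ENNReal.ofReal c / ENNReal.ofReal ε := by
          rw [hlint]
          exact ENNReal.div_le_div_right (ENNReal.ofReal_le_ofReal hint) _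
      _ = ENNReal.ofReal (δr / 2) := by
          rw [← ENNReal.ofReal_div_of_pos hε]
          congr 1
          rw [hc_def]
          field_simp
  calc P S ≤ P (S ∩ B) + P (S \ B) := measure_le_inter_add_diff P S B
    _ ≤ ENNReal.ofReal (δr / 2) + ENNReal.ofReal (δr / 2) :=
        add_le_add (le_trans (measure_mono Set.inter_subset_right) h1) h2
    _ = ENNReal.ofReal δr := by
        rw [← ENNReal.ofReal_add (by positivity) (by positivity)]
        ring_nf
    _ = min δ 1 := ENNReal.ofReal_toReal (ne_top_of_le_ne_top (by simp) (min_le_right _ _))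
    _ ≤ δ := min_le_left _ _
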